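/- arXiv:0903.5456 — 11 statements merged into one kernel-verified Lean document; each statement's English description precedes it below -/
import Mathlib

section
/- Fix t ∈ ℝ and n₀ ∈ ℕ, and let T be a bounded operator on H satisfying T Φ_0 = 0 and T Φ_s = x_s^{−n₀} Φ_s for all s ≥ 1. Set H_L := A_L† A_L. Then for all L ≤ M one has the operator-norm estimate ‖T ∘ (exp(i t H_M) − exp(i t H_L))‖ ≤ 2 Σ_{s=L+2}^{M+1} x_s^{−n₀}. If in addition Σ_{s=1}^{∞} x_s^{−n₀} < ∞, then the sequence of bounded operators (T ∘ exp(i t H_L))_{L∈ℕ} is Cauchy in operator norm and hence converges in the uniform topology. -/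
open Filter Nat

lemma exp_apply_eigen' {H : Type*} [NormedAddCommGroup H] [InnerProductSpace ℂ H]
    [CompleteSpace H] (S : H →L[ℂ] H) (v : H) (c : ℂ) (h : S v = c • v) :
    NormedSpace.exp S v = NormedSpace.exp c • v := by
  have hpow : ∀ n : ℕ, (S ^ n) v = c ^ n • v := by
    intro n
    induction n with
    | zero => simp
    | succ n ih =>
      rw [pow_succ, ContinuousLinearMap.mul_apply, h, map_smul, ih, smul_smul]; congr 1; ring
  have hS : Summable fun n : ℕ => ((n ! : ℂ))⁻¹ • S ^ n := NormedSpace.expSeries_summable' S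
  have hc : Summable fun n : ℕ => ((n ! : ℂ))⁻¹ * c ^ n := by
    simpa [smul_eq_mul] using NormedSpace.expSeries_summable' (𝕂 := ℂ) c
  calc NormedSpace.exp S v = (∑' n : ℕ, ((n ! : ℂ))⁻¹ • S ^ n) v := by
        rw [NormedSpace.exp_eq_tsum ℂ]
    _ = ∑' n : ℕ, (((n ! : ℂ))⁻¹ • S ^ n) v := by
        simpa using (ContinuousLinearMap.apply ℂ H v).map_tsum hS
    _ = ∑' n : ℕ, (((n ! : ℂ))⁻¹ * c ^ n) • v := by
        congr 1; funext n
        rw [ContinuousLinearMap.smul_apply, hpow, smul_smul]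
    _ = (∑' n : ℕ, ((n ! : ℂ))⁻¹ * c ^ n) • v := hc.tsum_smul_const v
    _ = NormedSpace.exp c • v := by rw [NormedSpace.exp_eq_tsum ℂ]; simp [smul_eq_mul]

/-- With H_L = A_L† A_L and T bounded with T Φ_0 = 0, T Φ_s = x_s^{−n₀} Φ_s
for s ≥ 1, for all L ≤ M one has ‖T ∘ (exp(itH_M) − exp(itH_L))‖ ≤ 2 Σ_{s=L+2}^{M+1} x_s^{−n₀}.
If moreover Σ_{s=1}^{∞} x_s^{−n₀} < ∞, then (T ∘ exp(itH_L))_L is Cauchy in operator norm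
and hence converges in the uniform topology. -/
theorem statement_8
    {H : Type*} [NormedAddCommGroup H] [InnerProductSpace ℂ H] [CompleteSpace H]
    (Φ : HilbertBasis ℕ ℂ H)
    (x : ℕ → ℝ) (hx_nonneg : ∀ n, 0 ≤ x n) (hx_pos : ∀ n, 1 ≤ n → 0 < x n)
    (A : ℕ → H →L[ℂ] H)
    (hA_zero : ∀ L, A L (Φ 0) = 0)
    (hA_mid : ∀ L k, 1 ≤ k → k ≤ L + 1 →
      A L (Φ k) = (Real.sqrt (x k) : ℂ) • Φ (k - 1))
    (hA_hi : ∀ L k, L + 2 ≤ k → A L (Φ k) = 0)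
    (t : ℝ) (n₀ : ℕ)
    (T : H →L[ℂ] H)
    (hT_zero : T (Φ 0) = 0)
    (hT : ∀ s, 1 ≤ s → T (Φ s) = (((x s ^ n₀)⁻¹ : ℝ) : ℂ) • Φ s)
    (HL : ℕ → H →L[ℂ] H)
    (hHL : ∀ L, HL L = ContinuousLinearMap.adjoint (A L) ∘L A L) :
    (∀ L M, L ≤ M →
      ‖T ∘L (NormedSpace.exp ((Complex.I * (t : ℂ)) • HL M)
            - NormedSpace.exp ((Complex.I * (t : ℂ)) • HL L))‖
        ≤ 2 * ∑ s ∈ Finset.Icc (L + 2) (M + 1), (x s ^ n₀)⁻¹) ∧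
    (Summable (fun s : ℕ => (x (s + 1) ^ n₀)⁻¹) →
      CauchySeq (fun L => T ∘L NormedSpace.exp ((Complex.I * (t : ℂ)) • HL L)) ∧
      ∃ B : H →L[ℂ] H,
        Tendsto (fun L => T ∘L NormedSpace.exp ((Complex.I * (t : ℂ)) • HL L))
          atTop (nhds B)) := by
  classical
  have horth := Φ.orthonormal
  have hite : ∀ i j : ℕ, (inner ℂ (Φ i) (Φ j) : ℂ) = if i = j then 1 else 0 :=
    orthonormal_iff_ite.mp horth
  -- extensionality via basis inner products
  have hext : ∀ a b : H, (∀ i, (inner ℂ (Φ i) a : ℂ) = inner ℂ (Φ i) b) → a = b := by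
    intro a b hab
    apply Φ.repr.injective
    apply lp.ext
    funext i
    rw [Φ.repr_apply_apply, Φ.repr_apply_apply]
    exact hab i
  -- eigenvalues of HL
  set μ : ℕ → ℕ → ℝ := fun L k => if 1 ≤ k ∧ k ≤ L + 1 then x k else 0 with hμ
  have hHL_eigen : ∀ L k, HL L (Φ k) = ((μ L k : ℝ) : ℂ) • Φ k := by
    intro L k
    rcases Nat.eq_zero_or_pos k with hk0 | hk1
    · subst hk0
      simp [hHL, hμ, hA_zero]
    replace hk1 : 1 ≤ k := hk1
    by_cases hk2 : k ≤ L + 1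
    · have hμv : μ L k = x k := by simp [hμ, hk1, hk2]
      rw [hμv, hHL]
      apply hext
      intro j
      rw [ContinuousLinearMap.comp_apply, ContinuousLinearMap.adjoint_inner_right]
      rw [hA_mid L k hk1 hk2, inner_smul_right, inner_smul_right]
      rcases Nat.eq_zero_or_pos j with hj0 | hj1
      · subst hj0
        rw [hA_zero, inner_zero_left, hite]
        have : (0 : ℕ) ≠ k := by omega
        simp [this]
      replace hj1 : 1 ≤ j := hj1
      by_cases hj2 : j ≤ L + 1
      · rw [hA_mid L j hj1 hj2, inner_smul_left, hite, hite]
        by_cases hjk : j = k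
        · subst hjk
          simp only [if_pos rfl, mul_one, Complex.conj_ofReal, if_true]
          rw [← Complex.ofReal_mul, Real.mul_self_sqrt (hx_nonneg j)]
        · have : j - 1 ≠ k - 1 := by omega
          simp [hjk, this]
      · have hj : L + 2 ≤ j := by omega
        rw [hA_hi L j hj, inner_zero_left, hite]
        have : j ≠ k := by omega
        simp [this]
    · have hk : L + 2 ≤ k := by omega
      have hμv : μ L k = 0 := by simp [hμ]; omega
      rw [hμv, hHL]
      simp [hA_hi L k hk]
  -- exponentials on basis vectors
  have hexp : ∀ L k, NormedSpace.exp ((Complex.I * (t : ℂ)) • HL L) (Φ k)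
      = Complex.exp (Complex.I * (t : ℂ) * (μ L k : ℝ)) • Φ k := by
    intro L k
    have he : ((Complex.I * (t : ℂ)) • HL L) (Φ k)
        = (Complex.I * (t : ℂ) * (μ L k : ℝ)) • Φ k := by
      rw [ContinuousLinearMap.smul_apply, hHL_eigen, smul_smul]
    rw [exp_apply_eigen' _ _ _ he, Complex.exp_eq_exp_ℂ]
  -- coefficients
  set c : ℕ → ℂ := fun s =>
    (((x s ^ n₀)⁻¹ : ℝ) : ℂ) * (Complex.exp (Complex.I * (t : ℂ) * (x s : ℝ)) - 1) with hc
  have hcnorm : ∀ s, 1 ≤ s → ‖c s‖ ≤ 2 * (x s ^ n₀)⁻¹ := by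
    intro s hs
    have h1 : ‖Complex.exp (Complex.I * (t : ℂ) * (x s : ℝ))‖ = 1 := by
      rw [Complex.norm_exp]
      have : (Complex.I * (t : ℂ) * ((x s : ℝ) : ℂ)).re = 0 := by
        simp [Complex.mul_re, Complex.mul_im]
      rw [this, Real.exp_zero]
    have h2 : ‖Complex.exp (Complex.I * (t : ℂ) * (x s : ℝ)) - 1‖ ≤ 2 := by
      calc ‖Complex.exp (Complex.I * (t : ℂ) * (x s : ℝ)) - 1‖
          ≤ ‖Complex.exp (Complex.I * (t : ℂ) * (x s : ℝ))‖ + ‖(1 : ℂ)‖ := norm_sub_le _ _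
        _ = 2 := by rw [h1]; norm_num
    have hnn : (0 : ℝ) ≤ (x s ^ n₀)⁻¹ := inv_nonneg.mpr (pow_nonneg (hx_nonneg s) n₀)
    calc ‖c s‖ = ‖(((x s ^ n₀)⁻¹ : ℝ) : ℂ)‖ * ‖Complex.exp (Complex.I * (t : ℂ) * (x s : ℝ)) - 1‖ :=
          norm_mul _ _
      _ = (x s ^ n₀)⁻¹ * ‖Complex.exp (Complex.I * (t : ℂ) * (x s : ℝ)) - 1‖ := by
          rw [Complex.norm_real, Real.norm_of_nonneg hnn]
      _ ≤ (x s ^ n₀)⁻¹ * 2 := by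
          exact mul_le_mul_of_nonneg_left h2 hnn
      _ = 2 * (x s ^ n₀)⁻¹ := by ring
  -- the key bound
  have key : ∀ L M, L ≤ M →
      ‖T ∘L (NormedSpace.exp ((Complex.I * (t : ℂ)) • HL M)
            - NormedSpace.exp ((Complex.I * (t : ℂ)) • HL L))‖
        ≤ 2 * ∑ s ∈ Finset.Icc (L + 2) (M + 1), (x s ^ n₀)⁻¹ := by
    intro L M hLM
    set P : ℕ → H →L[ℂ] H := fun s => (innerSL ℂ (Φ s)).smulRight (Φ s) with hP
    set D : H →L[ℂ] H := ∑ s ∈ Finset.Icc (L + 2) (M + 1), c s • P s with hD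
    have hdense : Dense ((Submodule.span ℂ (Set.range (Φ : ℕ → H))) : Set H) := by
      rw [Submodule.dense_iff_topologicalClosure_eq_top]
      exact Φ.dense_span
    have hDeq : T ∘L (NormedSpace.exp ((Complex.I * (t : ℂ)) • HL M)
        - NormedSpace.exp ((Complex.I * (t : ℂ)) • HL L)) = D := by
      apply ContinuousLinearMap.ext_on hdense
      rintro v ⟨k, rfl⟩
      have hDk : D (Φ k) = if k ∈ Finset.Icc (L + 2) (M + 1) then c k • Φ k else 0 := by
        rw [hD, ContinuousLinearMap.sum_apply]
        have hterm : ∀ s, (c s • P s) (Φ k) = if s = k then c s • Φ s else 0 := by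
          intro s
          rw [ContinuousLinearMap.smul_apply, hP]
          simp only [ContinuousLinearMap.smulRight_apply, innerSL_apply_apply, hite]
          by_cases hsk : s = k <;> simp [hsk]
        simp only [hterm]
        rw [Finset.sum_ite_eq']
      show T ((NormedSpace.exp ((Complex.I * (t : ℂ)) • HL M)
        - NormedSpace.exp ((Complex.I * (t : ℂ)) • HL L)) (Φ k)) = D (Φ k)
      rw [ContinuousLinearMap.sub_apply, hexp, hexp, ← sub_smul, map_smul, hDk]
      rcases Nat.eq_zero_or_pos k with hk0 | hk1
      · subst hk0
        have : (0 : ℕ) ∉ Finset.Icc (L + 2) (M + 1) := by simp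
        simp [hT_zero, this]
      replace hk1 : 1 ≤ k := hk1
      by_cases hk2 : k ≤ L + 1
      · have h1 : μ M k = x k := by simp [hμ]; omega
        have h2 : μ L k = x k := by simp [hμ]; omega
        have : k ∉ Finset.Icc (L + 2) (M + 1) := by simp; omega
        simp [h1, h2, this]
      · by_cases hk3 : k ≤ M + 1
        · have h1 : μ M k = x k := by simp [hμ]; omega
          have h2 : μ L k = 0 := by simp [hμ]; omega
          have hk : k ∈ Finset.Icc (L + 2) (M + 1) := by simp; omega
          rw [h1, h2, hT k hk1, if_pos hk]
          rw [smul_smul, hc]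
          congr 1
          simp [Complex.exp_zero]
          ring
        · have h1 : μ M k = 0 := by simp [hμ]; omega
          have h2 : μ L k = 0 := by simp [hμ]; omega
          have : k ∉ Finset.Icc (L + 2) (M + 1) := by simp; omega
          simp [h1, h2, this]
    rw [hDeq, hD]
    calc ‖∑ s ∈ Finset.Icc (L + 2) (M + 1), c s • P s‖
        ≤ ∑ s ∈ Finset.Icc (L + 2) (M + 1), ‖c s • P s‖ := norm_sum_le _ _
      _ ≤ ∑ s ∈ Finset.Icc (L + 2) (M + 1), 2 * (x s ^ n₀)⁻¹ := by
          apply Finset.sum_le_sum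
          intro s hs
          have hs1 : 1 ≤ s := by simp at hs; omega
          have hPnorm : ‖P s‖ = 1 := by
            rw [hP]
            simp only [ContinuousLinearMap.norm_smulRight_apply, innerSL_apply_norm]
            rw [horth.1 s]; norm_num
          rw [norm_smul, hPnorm, mul_one]
          exact hcnorm s hs1
      _ = 2 * ∑ s ∈ Finset.Icc (L + 2) (M + 1), (x s ^ n₀)⁻¹ := by
          rw [Finset.mul_sum]
  refine ⟨key, ?_⟩
  intro hsum
  set f : ℕ → H →L[ℂ] H :=
    fun L => T ∘L NormedSpace.exp ((Complex.I * (t : ℂ)) • HL L) with hf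
  have hstep : ∀ n, dist (f n) (f (n + 1)) ≤ 2 * (x (n + 2) ^ n₀)⁻¹ := by
    intro n
    have := key n (n + 1) (Nat.le_succ n)
    rw [Finset.Icc_self, Finset.sum_singleton] at this
    have heq : T ∘L (NormedSpace.exp ((Complex.I * (t : ℂ)) • HL (n + 1))
        - NormedSpace.exp ((Complex.I * (t : ℂ)) • HL n)) = f (n + 1) - f n := by
      rw [ContinuousLinearMap.comp_sub]
    rw [heq] at this
    rw [dist_eq_norm, norm_sub_rev]
    exact this
  have hd : Summable (fun n : ℕ => 2 * (x (n + 2) ^ n₀)⁻¹) := by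
    have : Summable (fun n : ℕ => (x (n + 1 + 1) ^ n₀)⁻¹) :=
      (summable_nat_add_iff (f := fun s : ℕ => (x (s + 1) ^ n₀)⁻¹) 1).mpr hsum
    exact this.mul_left 2
  have hcauchy : CauchySeq f := cauchySeq_of_dist_le_of_summable _ hstep hd
  exact ⟨hcauchy, cauchySeq_tendsto_of_complete hcauchy⟩
end

section
/- Set H_L := A_L† A_L. Then for all L ≤ M and every t ∈ ℝ one has the identity of bounded operators exp(i t H_L) = (I − Q_{L+1}) + Q_{L+1} ∘ exp(i t H_M) ∘ Q_{L+1}, where I is the identity operator on H. -/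
open scoped InnerProductSpace

lemma aux_vec_ext {H : Type*} [NormedAddCommGroup H] [InnerProductSpace ℂ H]
    (Φ : HilbertBasis ℕ ℂ H) {u v : H}
    (h : ∀ i, ⟪Φ i, u⟫_ℂ = ⟪Φ i, v⟫_ℂ) : u = v := by
  apply Φ.repr.injective
  ext i
  rw [Φ.repr_apply_apply, Φ.repr_apply_apply]
  exact h i

lemma aux_clm_ext {H : Type*} [NormedAddCommGroup H] [InnerProductSpace ℂ H]
    (Φ : HilbertBasis ℕ ℂ H) {f g : H →L[ℂ] H}
    (h : ∀ k, f (Φ k) = g (Φ k)) : f = g := by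
  refine ContinuousLinearMap.ext_on
    (Submodule.dense_iff_topologicalClosure_eq_top.mpr Φ.dense_span) ?_
  rintro _ ⟨k, rfl⟩
  exact h k

/-- Key algebraic lemma: if `P` is idempotent and commutes with `B`, then
`exp (B * P) = (1 - P) + P * exp B * P`. -/
lemma aux_exp_corner {𝔸 : Type*} [NormedRing 𝔸] [NormedAlgebra ℂ 𝔸] [CompleteSpace 𝔸]
    (B P : 𝔸) (hPP : P * P = P) (hPB : P * B = B * P) :
    NormedSpace.exp (B * P) = (1 - P) + P * NormedSpace.exp B * P := by
  have hpow : ∀ n : ℕ, (B * P) ^ (n + 1) = B ^ (n + 1) * P := by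
    intro n
    induction n with
    | zero => simp
    | succ n ih =>
      rw [pow_succ, ih, mul_assoc, ← mul_assoc P B P, hPB, mul_assoc B P P, hPP,
        ← mul_assoc, ← pow_succ]
  have hsumB : Summable fun n : ℕ => ((n.factorial : ℂ))⁻¹ • B ^ n :=
    NormedSpace.expSeries_summable' B
  have hsumBP : Summable fun n : ℕ => ((n.factorial : ℂ))⁻¹ • (B * P) ^ n :=
    NormedSpace.expSeries_summable' (B * P)
  have hEP : NormedSpace.exp B * P = ∑' n : ℕ, ((n.factorial : ℂ))⁻¹ • (B ^ n * P) := by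
    rw [NormedSpace.exp_eq_tsum (𝕂 := ℂ)]
    rw [← hsumB.tsum_mul_right P]
    exact tsum_congr fun n => smul_mul_assoc _ _ _
  have hsumBnP : Summable fun n : ℕ => ((n.factorial : ℂ))⁻¹ • (B ^ n * P) := by
    have := hsumB.mul_right P
    simpa [smul_mul_assoc] using this
  have hLHS : NormedSpace.exp (B * P)
      = 1 + ∑' n : ℕ, (((n+1).factorial : ℂ))⁻¹ • (B ^ (n + 1) * P) := by
    have h0 : NormedSpace.exp (B * P)
        = ∑' n : ℕ, ((n.factorial : ℂ))⁻¹ • (B * P) ^ n := by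
      rw [NormedSpace.exp_eq_tsum (𝕂 := ℂ)]
    rw [h0, Summable.tsum_eq_zero_add hsumBP]
    simp only [pow_zero, Nat.factorial_zero, Nat.cast_one, inv_one, one_smul]
    congr 1
    exact tsum_congr fun n => by rw [hpow]
  have hRHS : NormedSpace.exp B * P
      = P + ∑' n : ℕ, (((n+1).factorial : ℂ))⁻¹ • (B ^ (n + 1) * P) := by
    rw [hEP, Summable.tsum_eq_zero_add hsumBnP]
    simp only [pow_zero, Nat.factorial_zero, Nat.cast_one, inv_one, one_smul, one_mul]
  have hcomm : Commute P (NormedSpace.exp B) := (Commute.exp_right hPB)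
  have hPEP : P * NormedSpace.exp B * P = NormedSpace.exp B * P := by
    rw [hcomm, mul_assoc, hPP]
  rw [hPEP, hLHS]
  rw [hRHS]
  abel

/-- With H_L = A_L† A_L, for all L ≤ M and t ∈ ℝ,
exp(itH_L) = (I − Q_{L+1}) + Q_{L+1} ∘ exp(itH_M) ∘ Q_{L+1}. -/
theorem statement_9
    {H : Type*} [NormedAddCommGroup H] [InnerProductSpace ℂ H] [CompleteSpace H]
    (Φ : HilbertBasis ℕ ℂ H)
    (x : ℕ → ℝ) (hx_nonneg : ∀ n, 0 ≤ x n) (hx_pos : ∀ n, 1 ≤ n → 0 < x n)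
    (A : ℕ → H →L[ℂ] H)
    (hA_zero : ∀ L, A L (Φ 0) = 0)
    (hA_mid : ∀ L k, 1 ≤ k → k ≤ L + 1 →
      A L (Φ k) = (Real.sqrt (x k) : ℂ) • Φ (k - 1))
    (hA_hi : ∀ L k, L + 2 ≤ k → A L (Φ k) = 0)
    (Q : ℕ → H →L[ℂ] H)
    (hQ : ∀ L (v : H), Q L v = ∑ k ∈ Finset.range (L + 1), ⟪Φ k, v⟫_ℂ • Φ k)
    (HL : ℕ → H →L[ℂ] H)
    (hHL : ∀ L, HL L = ContinuousLinearMap.adjoint (A L) ∘L A L)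
    (L M : ℕ) (hLM : L ≤ M) (t : ℝ) :
    NormedSpace.exp ((Complex.I * (t : ℂ)) • HL L)
      = (1 - Q (L + 1))
        + Q (L + 1) ∘L NormedSpace.exp ((Complex.I * (t : ℂ)) • HL M) ∘L Q (L + 1) := by
  have hij : ∀ a b : ℕ, ⟪Φ a, Φ b⟫_ℂ = if a = b then 1 else 0 :=
    fun a b => orthonormal_iff_ite.mp Φ.orthonormal a b
  -- action of Q (L+1) on basis vectors
  have hQΦ : ∀ k, Q (L + 1) (Φ k) = if k ≤ L + 1 then Φ k else 0 := by
    intro k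
    rw [hQ]
    have : ∀ j ∈ Finset.range (L + 2), ⟪Φ j, Φ k⟫_ℂ • Φ j
        = if j = k then Φ j else 0 := by
      intro j _
      rw [hij]
      split <;> simp
    rw [Finset.sum_congr rfl this, Finset.sum_ite_eq' (Finset.range (L + 2)) k fun j => Φ j]
    simp [Finset.mem_range, Nat.lt_succ_iff]
  -- eigenvalue computation for HL N
  have hHΦ : ∀ N k, HL N (Φ k)
      = (if 1 ≤ k ∧ k ≤ N + 1 then (x k : ℂ) else 0) • Φ k := by
    intro N k
    apply aux_vec_ext Φ
    intro j
    rw [hHL, ContinuousLinearMap.comp_apply, ContinuousLinearMap.adjoint_inner_right,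
      inner_smul_right]
    by_cases hk1 : 1 ≤ k
    · by_cases hk2 : k ≤ N + 1
      · rw [hA_mid N k hk1 hk2, if_pos ⟨hk1, hk2⟩]
        by_cases hj1 : 1 ≤ j
        · by_cases hj2 : j ≤ N + 1
          · rw [hA_mid N j hj1 hj2, inner_smul_left, inner_smul_right, hij, hij]
            by_cases hjk : j = k
            · subst hjk
              simp [Complex.conj_ofReal, ← Complex.ofReal_mul,
                Real.mul_self_sqrt (hx_nonneg j)]
            · have h' : j - 1 ≠ k - 1 := fun h => hjk (by omega)
              simp [h', hjk]
          · rw [hA_hi N j (by omega)]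
            simp [hij, show j ≠ k from by omega]
        · have hj0 : j = 0 := by omega
          subst hj0
          rw [hA_zero]
          simp [hij, show (0 : ℕ) ≠ k from by omega]
      · rw [hA_hi N k (by omega)]
        simp [hij, hk2]
    · have hk0 : k = 0 := by omega
      subst hk0
      rw [hA_zero]
      simp [hk1]
  -- operator identities
  set P : H →L[ℂ] H := Q (L + 1) with hP
  have hPP : P * P = P := by
    apply aux_clm_ext Φ
    intro k
    by_cases hk : k ≤ L + 1
    · rw [ContinuousLinearMap.mul_apply, hQΦ, if_pos hk, hQΦ, if_pos hk]
    · rw [ContinuousLinearMap.mul_apply, hQΦ, if_neg hk, map_zero]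
  have hMP : HL M * P = HL L := by
    apply aux_clm_ext Φ
    intro k
    by_cases hk : k ≤ L + 1
    · rw [ContinuousLinearMap.mul_apply, hQΦ, if_pos hk, hHΦ M k, hHΦ L k]
      by_cases h1 : 1 ≤ k
      · rw [if_pos ⟨h1, by omega⟩, if_pos ⟨h1, hk⟩]
      · rw [if_neg (fun h => h1 h.1), if_neg (fun h => h1 h.1)]
    · rw [ContinuousLinearMap.mul_apply, hQΦ, if_neg hk, map_zero, hHΦ L k,
        if_neg (fun h => hk h.2), zero_smul]
  have hPM : P * HL M = HL L := by
    apply aux_clm_ext Φ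
    intro k
    by_cases hk : k ≤ L + 1
    · rw [ContinuousLinearMap.mul_apply, hHΦ M k, map_smul, hQΦ, if_pos hk, hHΦ L k]
      by_cases h1 : 1 ≤ k
      · rw [if_pos ⟨h1, by omega⟩, if_pos ⟨h1, hk⟩]
      · rw [if_neg (fun h => h1 h.1), if_neg (fun h => h1 h.1)]
    · rw [ContinuousLinearMap.mul_apply, hHΦ M k, map_smul, hQΦ, if_neg hk, smul_zero,
        hHΦ L k, if_neg (fun h => hk h.2), zero_smul]
  set B : H →L[ℂ] H := (Complex.I * (t : ℂ)) • HL M with hB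
  have hBL : (Complex.I * (t : ℂ)) • HL L = B * P := by
    rw [hB, smul_mul_assoc, hMP]
  have hPB : P * B = B * P := by
    rw [hB, smul_mul_assoc, hMP, mul_smul_comm, hPM]
  rw [hBL, aux_exp_corner B P hPP hPB]
  rw [ContinuousLinearMap.mul_def, ContinuousLinearMap.mul_def, ContinuousLinearMap.comp_assoc]
end

section
/- Let z ∈ ℂ be such that Σ_{k=0}^{∞} |z|^{2k}/x_k! converges. Then for every M ∈ ℕ one has A_M Ξ(z) = z · Q_M Ξ(z); that is, the generalized coherent state Ξ(z) is an eigenvector of the truncated annihilation operator up to the projection Q_M. -/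
open scoped InnerProductSpace

/-- If Σ |z|^{2k}/x_k! converges, then for every M,
A_M Ξ(z) = z · Q_M Ξ(z). -/
theorem statement_10
    {H : Type*} [NormedAddCommGroup H] [InnerProductSpace ℂ H] [CompleteSpace H]
    (Φ : HilbertBasis ℕ ℂ H)
    (x : ℕ → ℝ) (hx_nonneg : ∀ n, 0 ≤ x n) (hx_pos : ∀ n, 1 ≤ n → 0 < x n)
    (A : ℕ → H →L[ℂ] H)
    (hA_zero : ∀ L, A L (Φ 0) = 0)
    (hA_mid : ∀ L k, 1 ≤ k → k ≤ L + 1 →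
      A L (Φ k) = (Real.sqrt (x k) : ℂ) • Φ (k - 1))
    (hA_hi : ∀ L k, L + 2 ≤ k → A L (Φ k) = 0)
    (Q : ℕ → H →L[ℂ] H)
    (hQ : ∀ L (v : H), Q L v = ∑ k ∈ Finset.range (L + 1), ⟪Φ k, v⟫_ℂ • Φ k)
    (xfact : ℕ → ℝ) (hxfact0 : xfact 0 = 1)
    (hxfact : ∀ k, xfact (k + 1) = xfact k * x (k + 1))
    (z : ℂ)
    (hconv : Summable (fun k : ℕ => ‖z‖ ^ (2 * k) / xfact k))
    (Ξ : H)
    (hΞ : Ξ = ((Real.sqrt (∑' k : ℕ, ‖z‖ ^ (2 * k) / xfact k))⁻¹ : ℂ)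
        • ∑' k : ℕ, (z ^ k / (Real.sqrt (xfact k) : ℂ)) • Φ k)
    (M : ℕ) :
    A M Ξ = z • Q M Ξ :=
  by
  have hxfact_pos : ∀ k, 0 < xfact k := by
    intro k
    induction k with
    | zero => rw [hxfact0]; norm_num
    | succ n ih => rw [hxfact n]; exact mul_pos ih (hx_pos (n + 1) (by omega))
  set a : ℕ → ℂ := fun k => z ^ k / (Real.sqrt (xfact k) : ℂ) with ha
  have hnorm : ∀ k, ‖a k‖ ^ 2 = ‖z‖ ^ (2 * k) / xfact k := by
    intro k
    simp only [ha, norm_div, norm_pow, Complex.norm_real, Real.norm_eq_abs,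
      abs_of_nonneg (Real.sqrt_nonneg _)]
    rw [div_pow, Real.sq_sqrt (hxfact_pos k).le, ← pow_mul, mul_comm k 2]
  have hmem : Memℓp a 2 := by
    apply memℓp_gen
    have h2 : ((2 : ENNReal)).toReal = (2 : ℝ) := by norm_num
    rw [h2]
    have : (fun k => ‖a k‖ ^ (2 : ℝ)) = fun k => ‖z‖ ^ (2 * k) / xfact k := by
      funext k
      rw [← hnorm k]
      rw [← Real.rpow_natCast (‖a k‖) 2]
      norm_num
    rw [this]
    exact hconv
  set fl : lp (fun _ : ℕ => ℂ) 2 := ⟨a, hmem⟩ with hfl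
  set S : H := Φ.repr.symm fl with hS
  have hSum : HasSum (fun k => a k • Φ k) S := by
    have := Φ.hasSum_repr_symm fl
    simpa using this
  have htsum : (∑' k : ℕ, a k • Φ k) = S := hSum.tsum_eq
  have hinner : ∀ k, ⟪Φ k, S⟫_ℂ = a k := by
    intro k
    rw [← Φ.repr_apply_apply]
    rw [hS, LinearIsometryEquiv.apply_symm_apply]
  -- Q M S
  have hQS : Q M S = ∑ k ∈ Finset.range (M + 1), a k • Φ k := by
    rw [hQ]
    exact Finset.sum_congr rfl fun k _ => by rw [hinner]
  -- coefficient identity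
  have hkey : ∀ j, a (j + 1) * (Real.sqrt (x (j + 1)) : ℂ) = z * a j := by
    intro j
    have hne1 : (Real.sqrt (xfact j) : ℂ) ≠ 0 := by
      simp [Real.sqrt_ne_zero', hxfact_pos j]
    have hne2 : (Real.sqrt (x (j + 1)) : ℂ) ≠ 0 := by
      simp [Real.sqrt_ne_zero', hx_pos (j + 1) (by omega)]
    have h1 : (Real.sqrt (xfact (j + 1)) : ℂ)
        = (Real.sqrt (xfact j) : ℂ) * (Real.sqrt (x (j + 1)) : ℂ) := by
      rw [hxfact, Real.sqrt_mul (hxfact_pos j).le]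
      push_cast
      ring
    simp only [ha, h1, pow_succ]
    field_simp
  -- A M S
  have hAS : A M S = ∑ k ∈ Finset.range (M + 2), a k • A M (Φ k) := by
    have hmap : HasSum (fun k => a k • A M (Φ k)) (A M S) := by
      have := hSum.mapL (A M)
      simpa using this
    rw [← hmap.tsum_eq]
    apply tsum_eq_sum
    intro k hk
    rw [hA_hi M k (by simp at hk; omega)]
    simp
  have hAS2 : A M S = z • Q M S := by
    rw [hAS, hQS, Finset.sum_range_succ']
    rw [hA_zero M, smul_zero, add_zero, Finset.smul_sum]
    apply Finset.sum_congr rfl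
    intro j hj
    rw [hA_mid M (j + 1) (by omega) (by simp at hj; omega)]
    rw [smul_smul, hkey j, Nat.add_sub_cancel, mul_smul]
  rw [hΞ, htsum]
  rw [map_smul, map_smul, hAS2, smul_comm]
end

section
/- For every z ∈ ℂ and every L ≥ 1 the quasi-coherent state Ψ_L(z) satisfies A_L Ψ_L(z) = z · √(N_{L−1}(|z|²)/N_L(|z|²)) · Ψ_{L−1}(z). -/
/-- For every z ∈ ℂ and every L ≥ 1 the quasi-coherent state satisfies
A_L Ψ_L(z) = z √(N_{L−1}(|z|²)/N_L(|z|²)) Ψ_{L−1}(z). -/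
theorem statement_11
    {H : Type*} [NormedAddCommGroup H] [InnerProductSpace ℂ H] [CompleteSpace H]
    (Φ : HilbertBasis ℕ ℂ H)
    (x : ℕ → ℝ) (hx_nonneg : ∀ n, 0 ≤ x n) (hx_pos : ∀ n, 1 ≤ n → 0 < x n)
    (A : ℕ → H →L[ℂ] H)
    (hA_zero : ∀ L, A L (Φ 0) = 0)
    (hA_mid : ∀ L k, 1 ≤ k → k ≤ L + 1 →
      A L (Φ k) = (Real.sqrt (x k) : ℂ) • Φ (k - 1))
    (hA_hi : ∀ L k, L + 2 ≤ k → A L (Φ k) = 0)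
    (xfact : ℕ → ℝ) (hxfact0 : xfact 0 = 1)
    (hxfact : ∀ k, xfact (k + 1) = xfact k * x (k + 1))
    (z : ℂ)
    (NL : ℕ → ℝ)
    (hNL : ∀ L, NL L = ∑ k ∈ Finset.range (L + 2), ‖z‖ ^ (2 * k) / xfact k)
    (Ψ : ℕ → H)
    (hΨ : ∀ L, Ψ L = ((Real.sqrt (NL L))⁻¹ : ℂ)
        • ∑ k ∈ Finset.range (L + 2), (z ^ k / (Real.sqrt (xfact k) : ℂ)) • Φ k)
    (L : ℕ) (hL : 1 ≤ L) :
    A L (Ψ L) = (z * (Real.sqrt (NL (L - 1) / NL L) : ℂ)) • Ψ (L - 1) := by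
  have hxf_pos : ∀ k, 0 < xfact k := by
    intro k
    induction k with
    | zero => rw [hxfact0]; norm_num
    | succ n ih => rw [hxfact]; exact mul_pos ih (hx_pos (n+1) (by omega))
  have hNL_pos : ∀ M, 0 < NL M := by
    intro M
    rw [hNL]
    apply Finset.sum_pos'
    · intro i _
      have := hxf_pos i
      positivity
    · exact ⟨0, Finset.mem_range.mpr (by omega), by simp [hxfact0]⟩
  have hL2 : L - 1 + 2 = L + 1 := by omega
  rw [hΨ L, hΨ (L-1), hL2]
  simp only [map_smul, map_sum]
  rw [Finset.sum_range_succ']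
  simp only [hA_zero, smul_zero, add_zero, pow_zero]
  have hterm : ∀ k ∈ Finset.range (L+1),
      (z ^ (k+1) / (Real.sqrt (xfact (k+1)) : ℂ)) • A L (Φ (k+1))
      = (z * (z ^ k / (Real.sqrt (xfact k) : ℂ))) • Φ k := by
    intro k hk
    rw [Finset.mem_range] at hk
    rw [hA_mid L (k+1) (by omega) (by omega), smul_smul]
    simp only [Nat.add_sub_cancel]
    congr 1
    have hs : Real.sqrt (xfact (k+1)) = Real.sqrt (xfact k) * Real.sqrt (x (k+1)) := by
      rw [hxfact, Real.sqrt_mul (hxf_pos k).le]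
    rw [hs]
    have h1 : (Real.sqrt (xfact k) : ℂ) ≠ 0 := by
      exact_mod_cast (Real.sqrt_pos.mpr (hxf_pos k)).ne'
    have h2 : (Real.sqrt (x (k+1)) : ℂ) ≠ 0 := by
      exact_mod_cast (Real.sqrt_pos.mpr (hx_pos (k+1) (by omega))).ne'
    push_cast
    field_simp
    ring
  rw [Finset.sum_congr rfl hterm]
  simp only [mul_smul]
  rw [← Finset.smul_sum, smul_smul, smul_smul, smul_smul]
  congr 1
  have ha := hNL_pos (L-1)
  have hb := hNL_pos L
  rw [Real.sqrt_div ha.le]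
  have h1 : (Real.sqrt (NL (L-1)) : ℂ) ≠ 0 := by
    exact_mod_cast (Real.sqrt_pos.mpr ha).ne'
  have h2 : (Real.sqrt (NL L) : ℂ) ≠ 0 := by
    exact_mod_cast (Real.sqrt_pos.mpr hb).ne'
  push_cast
  field_simp
end

section
/- Let z ∈ ℂ be such that Σ_{k=0}^{∞} |z|^{2k}/x_k! converges. Then lim_{L→∞} ‖A_L Ψ_L(z) − z Ξ(z)‖ = 0; that is, the approximated eigenvalue relation for the quasi-coherent states converges in norm to the eigenvalue equation for the generalized coherent state Ξ(z). -/
open Filter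

/-- If Σ |z|^{2k}/x_k! converges, then
lim_{L→∞} ‖A_L Ψ_L(z) − z Ξ(z)‖ = 0. -/
theorem statement_12
    {H : Type*} [NormedAddCommGroup H] [InnerProductSpace ℂ H] [CompleteSpace H]
    (Φ : HilbertBasis ℕ ℂ H)
    (x : ℕ → ℝ) (hx_nonneg : ∀ n, 0 ≤ x n) (hx_pos : ∀ n, 1 ≤ n → 0 < x n)
    (A : ℕ → H →L[ℂ] H)
    (hA_zero : ∀ L, A L (Φ 0) = 0)
    (hA_mid : ∀ L k, 1 ≤ k → k ≤ L + 1 →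
      A L (Φ k) = (Real.sqrt (x k) : ℂ) • Φ (k - 1))
    (hA_hi : ∀ L k, L + 2 ≤ k → A L (Φ k) = 0)
    (xfact : ℕ → ℝ) (hxfact0 : xfact 0 = 1)
    (hxfact : ∀ k, xfact (k + 1) = xfact k * x (k + 1))
    (z : ℂ)
    (hconv : Summable (fun k : ℕ => ‖z‖ ^ (2 * k) / xfact k))
    (Ξ : H)
    (hΞ : Ξ = ((Real.sqrt (∑' k : ℕ, ‖z‖ ^ (2 * k) / xfact k))⁻¹ : ℂ)
        • ∑' k : ℕ, (z ^ k / (Real.sqrt (xfact k) : ℂ)) • Φ k)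
    (NL : ℕ → ℝ)
    (hNL : ∀ L, NL L = ∑ k ∈ Finset.range (L + 2), ‖z‖ ^ (2 * k) / xfact k)
    (Ψ : ℕ → H)
    (hΨ : ∀ L, Ψ L = ((Real.sqrt (NL L))⁻¹ : ℂ)
        • ∑ k ∈ Finset.range (L + 2), (z ^ k / (Real.sqrt (xfact k) : ℂ)) • Φ k) :
    Tendsto (fun L => ‖A L (Ψ L) - z • Ξ‖) atTop (nhds 0) := by
  -- positivity of xfact
  have hxf : ∀ k, 0 < xfact k := by
    intro k
    induction k with
    | zero => simp [hxfact0]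
    | succ n ih => rw [hxfact]; exact mul_pos ih (hx_pos (n+1) (by omega))
  set c : ℕ → ℂ := fun k => z ^ k / (Real.sqrt (xfact k) : ℂ) with hc
  -- summability of the coherent state series
  have hc2 : ∀ k, ‖c k‖ ^ 2 = ‖z‖ ^ (2 * k) / xfact k := by
    intro k
    have h1 : (0:ℝ) < Real.sqrt (xfact k) := Real.sqrt_pos.mpr (hxf k)
    simp only [hc, norm_div, norm_pow, Complex.norm_real, Real.norm_eq_abs,
      abs_of_pos h1]
    rw [div_pow, Real.sq_sqrt (hxf k).le, pow_mul]; ring_nf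
  have hsum : Summable (fun k => c k • Φ k) := by
    have := (Φ.orthonormal.orthogonalFamily.summable_iff_norm_sq_summable c).mpr
      (by simpa only [hc2] using hconv)
    simpa [LinearIsometry.toSpanSingleton_apply] using this
  set v : H := ∑' k, c k • Φ k with hvdef
  have hv : Tendsto (fun n => ∑ k ∈ Finset.range n, c k • Φ k) atTop (nhds v) :=
    hsum.hasSum.tendsto_sum_nat
  set N : ℝ := ∑' k : ℕ, ‖z‖ ^ (2 * k) / xfact k with hNdef
  have hN1 : (1:ℝ) ≤ N := by
    have h0 : ‖z‖ ^ (2 * 0) / xfact 0 = 1 := by simp [hxfact0]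
    calc (1:ℝ) = ‖z‖ ^ (2 * 0) / xfact 0 := h0.symm
      _ ≤ N := Summable.le_tsum hconv 0 (fun j _ => div_nonneg (pow_nonneg (norm_nonneg z) _) (hxf j).le)
  have hNL_tendsto : Tendsto NL atTop (nhds N) := by
    have h := hconv.hasSum.tendsto_sum_nat.comp (tendsto_add_atTop_nat 2)
    refine h.congr (fun L => ?_)
    simp [hNL L, Function.comp]
  -- coefficient convergence
  have hsqrtN : Real.sqrt N ≠ 0 := by positivity
  have hcoef : Tendsto (fun L => ((Real.sqrt (NL L))⁻¹ : ℂ)) atTop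
      (nhds ((Real.sqrt N)⁻¹ : ℂ)) := by
    have h1 : Tendsto (fun L => (Real.sqrt (NL L))⁻¹) atTop (nhds ((Real.sqrt N)⁻¹)) :=
      ((Real.continuous_sqrt.tendsto N).comp hNL_tendsto).inv₀ hsqrtN
    simpa [Function.comp_def, Complex.ofReal_inv] using (Complex.continuous_ofReal.tendsto _).comp h1
  -- key identity
  have key : ∀ L, A L (Ψ L) =
      z • (((Real.sqrt (NL L))⁻¹ : ℂ) • ∑ k ∈ Finset.range (L+1), c k • Φ k) := by
    intro L
    rw [hΨ L, map_smul, map_sum]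
    rw [smul_comm]
    congr 1
    rw [Finset.sum_range_succ']
    simp only [map_smul]
    rw [hA_zero, smul_zero, add_zero]
    rw [Finset.smul_sum]
    refine Finset.sum_congr rfl (fun i hi => ?_)
    have hi' : i + 1 ≤ L + 1 := by
      simp only [Finset.mem_range] at hi; omega
    rw [hA_mid L (i+1) (by omega) hi']
    simp only [Nat.add_sub_cancel]
    rw [smul_smul, smul_smul]
    congr 1
    have hx1 : (0:ℝ) ≤ x (i+1) := hx_nonneg _
    have : Real.sqrt (xfact (i+1)) = Real.sqrt (xfact i) * Real.sqrt (x (i+1)) := by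
      rw [hxfact, Real.sqrt_mul (hxf i).le]
    have hs : (0:ℝ) < Real.sqrt (xfact i) := Real.sqrt_pos.mpr (hxf i)
    have hs2 : (0:ℝ) < Real.sqrt (x (i+1)) := Real.sqrt_pos.mpr (hx_pos _ (by omega))
    have h2 : ((Real.sqrt (x (i+1)) : ℝ) : ℂ) ≠ 0 := by exact_mod_cast hs2.ne'
    have h3 : ((Real.sqrt (xfact i) : ℝ) : ℂ) ≠ 0 := by exact_mod_cast hs.ne'
    simp only [hc, this]
    push_cast
    field_simp
    ring
  -- conclusion
  rw [← tendsto_iff_norm_sub_tendsto_zero]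
  have hvL : Tendsto (fun L => ∑ k ∈ Finset.range (L+1), c k • Φ k) atTop (nhds v) :=
    hv.comp (tendsto_add_atTop_nat 1)
  have hmain : Tendsto (fun L => z • (((Real.sqrt (NL L))⁻¹ : ℂ) •
      ∑ k ∈ Finset.range (L+1), c k • Φ k)) atTop
      (nhds (z • (((Real.sqrt N)⁻¹ : ℂ) • v))) :=
    (hcoef.smul hvL).const_smul z
  have hΞ' : z • Ξ = z • (((Real.sqrt N)⁻¹ : ℂ) • v) := by rw [hΞ]
  rw [hΞ']
  exact hmain.congr (fun L => (key L).symm)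
end

section
/- Let z ∈ ℂ be such that Σ_{k=0}^{∞} |z|^{2k}/x_k! converges. Then for every L ∈ ℕ one has Ψ_L(z) = √(N(|z|²)/N_L(|z|²)) · Q_{L+1} Ξ(z), and consequently ‖Ψ_L(z) − Ξ(z)‖ → 0 as L → ∞. -/
open Filter
open scoped InnerProductSpace

/-- If Σ |z|^{2k}/x_k! converges, then for every L,
Ψ_L(z) = √(N(|z|²)/N_L(|z|²)) · Q_{L+1} Ξ(z), and consequently ‖Ψ_L(z) − Ξ(z)‖ → 0. -/
theorem statement_13
    {H : Type*} [NormedAddCommGroup H] [InnerProductSpace ℂ H] [CompleteSpace H]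
    (Φ : HilbertBasis ℕ ℂ H)
    (x : ℕ → ℝ) (hx_nonneg : ∀ n, 0 ≤ x n) (hx_pos : ∀ n, 1 ≤ n → 0 < x n)
    (Q : ℕ → H →L[ℂ] H)
    (hQ : ∀ L (v : H), Q L v = ∑ k ∈ Finset.range (L + 1), ⟪Φ k, v⟫_ℂ • Φ k)
    (xfact : ℕ → ℝ) (hxfact0 : xfact 0 = 1)
    (hxfact : ∀ k, xfact (k + 1) = xfact k * x (k + 1))
    (z : ℂ)
    (hconv : Summable (fun k : ℕ => ‖z‖ ^ (2 * k) / xfact k))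
    (Ξ : H)
    (hΞ : Ξ = ((Real.sqrt (∑' k : ℕ, ‖z‖ ^ (2 * k) / xfact k))⁻¹ : ℂ)
        • ∑' k : ℕ, (z ^ k / (Real.sqrt (xfact k) : ℂ)) • Φ k)
    (NL : ℕ → ℝ)
    (hNL : ∀ L, NL L = ∑ k ∈ Finset.range (L + 2), ‖z‖ ^ (2 * k) / xfact k)
    (Ψ : ℕ → H)
    (hΨ : ∀ L, Ψ L = ((Real.sqrt (NL L))⁻¹ : ℂ)
        • ∑ k ∈ Finset.range (L + 2), (z ^ k / (Real.sqrt (xfact k) : ℂ)) • Φ k) :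
    (∀ L, Ψ L = ((Real.sqrt ((∑' k : ℕ, ‖z‖ ^ (2 * k) / xfact k) / NL L)) : ℂ)
        • Q (L + 1) Ξ) ∧
    Tendsto (fun L => ‖Ψ L - Ξ‖) atTop (nhds 0) := by
  have hxf : ∀ k, 0 < xfact k := by
    intro k
    induction k with
    | zero => rw [hxfact0]; norm_num
    | succ n ih => rw [hxfact n]; exact mul_pos ih (hx_pos (n + 1) (by omega))
  set N : ℝ := ∑' k : ℕ, ‖z‖ ^ (2 * k) / xfact k with hN
  set c : ℕ → ℂ := fun k => z ^ k / (Real.sqrt (xfact k) : ℂ) with hc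
  have hnorm : ∀ k, ‖c k‖ ^ 2 = ‖z‖ ^ (2 * k) / xfact k := by
    intro k
    have h1 : (0:ℝ) ≤ xfact k := (hxf k).le
    simp only [hc, norm_div, norm_pow, Complex.norm_real, Real.norm_eq_abs,
      abs_of_nonneg (Real.sqrt_nonneg _), div_pow, Real.sq_sqrt h1]
    rw [← pow_mul, mul_comm k 2]
  have hterm_nonneg : ∀ k, 0 ≤ ‖z‖ ^ (2 * k) / xfact k := fun k =>
    div_nonneg (pow_nonneg (norm_nonneg z) _) (hxf k).le
  have hN_pos : 0 < N := by
    have h0 : 0 < ‖z‖ ^ (2 * 0) / xfact 0 := by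
      rw [hxfact0]; norm_num
    exact Summable.tsum_pos hconv hterm_nonneg 0 h0
  have hNL_pos : ∀ L, 0 < NL L := by
    intro L
    rw [hNL]
    apply Finset.sum_pos'
    · intro i _; exact hterm_nonneg i
    · exact ⟨0, Finset.mem_range.mpr (by omega), by rw [hxfact0]; norm_num⟩
  -- summability of the vector series
  have hsq : Summable (fun k => ‖c k‖ ^ 2) := by
    simpa only [hnorm] using hconv
  have hS : Summable (fun k => c k • Φ k) := by
    have := (Φ.orthonormal.orthogonalFamily.summable_iff_norm_sq_summable c).mpr hsq
    simpa [LinearIsometry.toSpanSingleton_apply] using this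
  set T : H := ∑' k, c k • Φ k with hT
  have hTsum : HasSum (fun k => c k • Φ k) T := hS.hasSum
  have hinner : ∀ k, ⟪Φ k, T⟫_ℂ = c k := by
    intro k
    have h1 : HasSum (fun j => ⟪Φ k, c j • Φ j⟫_ℂ) ⟪Φ k, T⟫_ℂ :=
      hTsum.mapL (innerSL ℂ (Φ k))
    have h2 : HasSum (fun j => ⟪Φ k, c j • Φ j⟫_ℂ) (c k) := by
      have : (fun j => ⟪Φ k, c j • Φ j⟫_ℂ) = fun j => if j = k then c k else 0 := by
        funext j
        rw [inner_smul_right]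
        rcases eq_or_ne j k with rfl | hjk
        · simp [orthonormal_iff_ite.mp Φ.orthonormal j j, Φ.orthonormal.1 j]
        · simp [orthonormal_iff_ite.mp Φ.orthonormal k j, hjk, (Ne.symm hjk)]
      rw [this]
      exact hasSum_ite_eq k (c k)
    exact h1.unique h2
  have hΞT : Ξ = ((Real.sqrt N)⁻¹ : ℂ) • T := hΞ
  have hinnerΞ : ∀ k, ⟪Φ k, Ξ⟫_ℂ = ((Real.sqrt N)⁻¹ : ℂ) * c k := by
    intro k
    rw [hΞT, inner_smul_right, hinner]
  have hQΞ : ∀ L, Q (L + 1) Ξ = ((Real.sqrt N)⁻¹ : ℂ) •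
      ∑ k ∈ Finset.range (L + 2), c k • Φ k := by
    intro L
    rw [hQ, Finset.smul_sum]
    apply Finset.sum_congr rfl
    intro k _
    rw [hinnerΞ, smul_smul]
  have hsqrtN_ne : Real.sqrt N ≠ 0 := ne_of_gt (Real.sqrt_pos.mpr hN_pos)
  have part1 : ∀ L, Ψ L = ((Real.sqrt (N / NL L)) : ℂ) • Q (L + 1) Ξ := by
    intro L
    rw [hΨ, hQΞ, smul_smul]
    congr 1
    have hsqrtNL_ne : Real.sqrt (NL L) ≠ 0 := ne_of_gt (Real.sqrt_pos.mpr (hNL_pos L))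
    have hr : Real.sqrt (N / NL L) * (Real.sqrt N)⁻¹ = (Real.sqrt (NL L))⁻¹ := by
      rw [Real.sqrt_div hN_pos.le]
      field_simp
    exact_mod_cast hr.symm
  refine ⟨part1, ?_⟩
  -- convergence part
  have hNLtend : Tendsto NL atTop (nhds N) := by
    have h1 : Tendsto (fun n => ∑ k ∈ Finset.range n, ‖z‖ ^ (2 * k) / xfact k)
        atTop (nhds N) := hconv.hasSum.tendsto_sum_nat
    have h2 : Tendsto (fun L : ℕ => L + 2) atTop atTop := tendsto_add_atTop_nat 2
    have h3 := h1.comp h2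
    exact h3.congr (fun L => (hNL L).symm)
  have hStend : Tendsto (fun L => ∑ k ∈ Finset.range (L + 2), c k • Φ k) atTop (nhds T) := by
    have h1 := hTsum.tendsto_sum_nat
    have h2 : Tendsto (fun L : ℕ => L + 2) atTop atTop := tendsto_add_atTop_nat 2
    exact h1.comp h2
  have hscal : Tendsto (fun L => ((Real.sqrt (NL L))⁻¹ : ℂ)) atTop
      (nhds ((Real.sqrt N)⁻¹ : ℂ)) := by
    have hreal : Tendsto (fun L => (Real.sqrt (NL L))⁻¹) atTop (nhds ((Real.sqrt N)⁻¹)) :=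
      (hNLtend.sqrt).inv₀ hsqrtN_ne
    have h := (Complex.continuous_ofReal.tendsto _).comp hreal
    simpa [Function.comp_def, Complex.ofReal_inv] using h
  have hΨtend : Tendsto Ψ atTop (nhds Ξ) := by
    rw [hΞT]
    have := hscal.smul hStend
    exact this.congr (fun L => (hΨ L).symm)
  rw [← tendsto_iff_norm_sub_tendsto_zero]
  exact hΨtend
end

section
/- Fix L ∈ ℕ, let ρ ∈ (0, ∞], and let λ be a measure on the interval [0, ρ) ⊂ ℝ such that ∫_{[0,ρ)} r^{2k} dλ(r) = x_k!/(2π) for every k with 0 ≤ k ≤ L+1. Then the quasi-coherent states satisfy the approximated resolution of the identity: for all vectors φ, ψ ∈ H, ∫_{[0,ρ)} ∫_{0}^{2π} N_L(r²) · ⟨φ, Ψ_L(r e^{iθ})⟩ · ⟨Ψ_L(r e^{iθ}), ψ⟩ dθ dλ(r) = ⟨φ, Q_{L+1} ψ⟩. -/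
open MeasureTheory
open scoped InnerProductSpace ENNReal

lemma aux_int_exp (n : ℤ) :
    ∫ θ in (0:ℝ)..(2 * Real.pi), Complex.exp ((n : ℂ) * Complex.I * θ)
      = if n = 0 then ((2 * Real.pi : ℝ) : ℂ) else 0 := by
  split_ifs with h
  · subst h
    simp
  · have hc : (n : ℂ) * Complex.I ≠ 0 :=
      mul_ne_zero (by exact_mod_cast h) Complex.I_ne_zero
    rw [integral_exp_mul_complex hc]
    have h1 : (n : ℂ) * Complex.I * ((2 * Real.pi : ℝ) : ℂ)
        = n * (2 * Real.pi * Complex.I) := by push_cast; ring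
    rw [h1, Complex.exp_int_mul_two_pi_mul_I]
    simp

/-- If λ is a measure on [0,ρ) whose moments satisfy
∫ r^{2k} dλ = x_k!/(2π) for 0 ≤ k ≤ L+1, then the quasi-coherent states satisfy the
approximated resolution of the identity:
∫∫ N_L(r²) ⟨φ, Ψ_L(re^{iθ})⟩ ⟨Ψ_L(re^{iθ}), ψ⟩ dθ dλ(r) = ⟨φ, Q_{L+1} ψ⟩. -/
theorem statement_14
    {H : Type*} [NormedAddCommGroup H] [InnerProductSpace ℂ H] [CompleteSpace H]
    (Φ : HilbertBasis ℕ ℂ H)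
    (x : ℕ → ℝ) (hx_nonneg : ∀ n, 0 ≤ x n) (hx_pos : ∀ n, 1 ≤ n → 0 < x n)
    (Q : ℕ → H →L[ℂ] H)
    (hQ : ∀ L (v : H), Q L v = ∑ k ∈ Finset.range (L + 1), ⟪Φ k, v⟫_ℂ • Φ k)
    (xfact : ℕ → ℝ) (hxfact0 : xfact 0 = 1)
    (hxfact : ∀ k, xfact (k + 1) = xfact k * x (k + 1))
    (NL : ℕ → ℝ → ℝ)
    (hNL : ∀ L u, NL L u = ∑ k ∈ Finset.range (L + 2), u ^ k / xfact k)
    (Ψ : ℕ → ℂ → H)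
    (hΨ : ∀ L (z : ℂ), Ψ L z = ((Real.sqrt (NL L (‖z‖ ^ 2)))⁻¹ : ℂ)
        • ∑ k ∈ Finset.range (L + 2), (z ^ k / (Real.sqrt (xfact k) : ℂ)) • Φ k)
    (L : ℕ) (ρ : ℝ≥0∞) (hρ : 0 < ρ)
    (μ : Measure ℝ)
    (S : Set ℝ) (hS : S = {r : ℝ | 0 ≤ r ∧ ENNReal.ofReal r < ρ})
    (hint : ∀ k ≤ L + 1, IntegrableOn (fun r : ℝ => r ^ (2 * k)) S μ)
    (hmoment : ∀ k ≤ L + 1,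
      ∫ r in S, r ^ (2 * k) ∂μ = xfact k / (2 * Real.pi))
    (φ ψ : H) :
    ∫ r in S, (∫ θ in (0:ℝ)..(2 * Real.pi),
        ((NL L (r ^ 2) : ℝ) : ℂ)
          * (⟪φ, Ψ L ((r : ℂ) * Complex.exp (Complex.I * (θ : ℂ)))⟫_ℂ
            * ⟪Ψ L ((r : ℂ) * Complex.exp (Complex.I * (θ : ℂ))), ψ⟫_ℂ)) ∂μ
      = ⟪φ, Q (L + 1) ψ⟫_ℂ := by
  have hπ : (0:ℝ) < Real.pi := Real.pi_pos
  have hxf : ∀ k, 0 < xfact k := by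
    intro k
    induction k with
    | zero => rw [hxfact0]; norm_num
    | succ n ih => rw [hxfact n]; exact mul_pos ih (hx_pos (n+1) (Nat.le_add_left 1 n))
  have hN : ∀ r : ℝ, 0 < NL L (r ^ 2) := by
    intro r
    rw [hNL]
    apply Finset.sum_pos'
    · exact fun i _ => div_nonneg (pow_nonneg (sq_nonneg r) i) (hxf i).le
    · exact ⟨0, Finset.mem_range.mpr (by omega), by simp [hxfact0]⟩
  have key : ∀ r : ℝ,
      (∫ θ in (0:ℝ)..(2 * Real.pi),
        ((NL L (r ^ 2) : ℝ) : ℂ)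
          * (⟪φ, Ψ L ((r : ℂ) * Complex.exp (Complex.I * (θ : ℂ)))⟫_ℂ
            * ⟪Ψ L ((r : ℂ) * Complex.exp (Complex.I * (θ : ℂ))), ψ⟫_ℂ))
      = ∑ k ∈ Finset.range (L + 2),
          ((r ^ (2 * k) : ℝ) : ℂ)
            * (((2 * Real.pi / xfact k : ℝ) : ℂ) * (⟪φ, Φ k⟫_ℂ * ⟪Φ k, ψ⟫_ℂ)) := by
    intro r
    have hpt : ∀ θ : ℝ,
        ((NL L (r ^ 2) : ℝ) : ℂ)
          * (⟪φ, Ψ L ((r : ℂ) * Complex.exp (Complex.I * (θ : ℂ)))⟫_ℂ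
            * ⟪Ψ L ((r : ℂ) * Complex.exp (Complex.I * (θ : ℂ))), ψ⟫_ℂ)
        = ∑ k ∈ Finset.range (L + 2), ∑ j ∈ Finset.range (L + 2),
            ((r ^ (k + j) / (Real.sqrt (xfact k) * Real.sqrt (xfact j)) : ℝ) : ℂ)
              * (⟪φ, Φ k⟫_ℂ * ⟪Φ j, ψ⟫_ℂ)
              * Complex.exp ((((k : ℤ) - (j : ℤ) : ℤ) : ℂ) * Complex.I * θ) := by
      intro θ
      set z : ℂ := (r : ℂ) * Complex.exp (Complex.I * (θ : ℂ)) with hzdef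
      have habs : ‖z‖ ^ 2 = r ^ 2 := by
        rw [hzdef, norm_mul, Complex.norm_exp]
        simp [Complex.norm_real, sq_abs]
      have hz : ∀ k j : ℕ, z ^ k * (starRingEnd ℂ z) ^ j
          = ((r : ℂ)) ^ (k + j)
              * Complex.exp ((((k : ℤ) - (j : ℤ) : ℤ) : ℂ) * Complex.I * θ) := by
        intro k j
        have h1 : (starRingEnd ℂ) z = (r : ℂ) * Complex.exp (-(Complex.I * θ)) := by
          rw [hzdef, map_mul, Complex.conj_ofReal, ← Complex.exp_conj]
          congr 1
          simp [map_mul, Complex.conj_I, Complex.conj_ofReal]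
        rw [hzdef, h1, mul_pow, mul_pow,
          show ((r:ℂ)^k * Complex.exp (Complex.I * θ)^k)
              * ((r:ℂ)^j * Complex.exp (-(Complex.I * θ))^j)
            = (r:ℂ)^(k+j)
              * (Complex.exp (Complex.I * θ)^k * Complex.exp (-(Complex.I * θ))^j) from by
            rw [pow_add]; ring,
          ← Complex.exp_nat_mul, ← Complex.exp_nat_mul, ← Complex.exp_add]
        congr 1
        push_cast
        ring
      have h1 : ⟪φ, Ψ L z⟫_ℂ
          = ((Real.sqrt (NL L (r ^ 2)))⁻¹ : ℂ)
            * ∑ k ∈ Finset.range (L + 2), z ^ k / (Real.sqrt (xfact k) : ℂ) * ⟪φ, Φ k⟫_ℂ := by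
        rw [hΨ, habs, inner_smul_right, inner_sum]
        simp_rw [inner_smul_right]
      have h2 : ⟪Ψ L z, ψ⟫_ℂ
          = ((Real.sqrt (NL L (r ^ 2)))⁻¹ : ℂ)
            * ∑ j ∈ Finset.range (L + 2),
                (starRingEnd ℂ z) ^ j / (Real.sqrt (xfact j) : ℂ) * ⟪Φ j, ψ⟫_ℂ := by
        rw [hΨ, habs, inner_smul_left, sum_inner]
        simp_rw [inner_smul_left, map_div₀, map_pow, Complex.conj_ofReal, map_inv₀]
        rw [Complex.conj_ofReal]
      have hc : ((NL L (r ^ 2) : ℝ) : ℂ) * ((Real.sqrt (NL L (r ^ 2)))⁻¹ : ℂ)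
          * ((Real.sqrt (NL L (r ^ 2)))⁻¹ : ℂ) = 1 := by
        have h := hN r
        have hr : (NL L (r ^ 2)) * (Real.sqrt (NL L (r ^ 2)))⁻¹
            * (Real.sqrt (NL L (r ^ 2)))⁻¹ = 1 := by
          rw [mul_assoc, ← mul_inv, Real.mul_self_sqrt h.le, mul_inv_cancel₀ h.ne']
        exact_mod_cast hr
      rw [h1, h2,
        show ((NL L (r ^ 2) : ℝ) : ℂ)
            * ((((Real.sqrt (NL L (r ^ 2)))⁻¹ : ℂ)
                * ∑ k ∈ Finset.range (L + 2), z ^ k / (Real.sqrt (xfact k) : ℂ) * ⟪φ, Φ k⟫_ℂ)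
              * (((Real.sqrt (NL L (r ^ 2)))⁻¹ : ℂ)
                * ∑ j ∈ Finset.range (L + 2),
                    (starRingEnd ℂ z) ^ j / (Real.sqrt (xfact j) : ℂ) * ⟪Φ j, ψ⟫_ℂ))
          = (((NL L (r ^ 2) : ℝ) : ℂ) * ((Real.sqrt (NL L (r ^ 2)))⁻¹ : ℂ)
              * ((Real.sqrt (NL L (r ^ 2)))⁻¹ : ℂ))
            * ((∑ k ∈ Finset.range (L + 2), z ^ k / (Real.sqrt (xfact k) : ℂ) * ⟪φ, Φ k⟫_ℂ)
              * ∑ j ∈ Finset.range (L + 2),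
                  (starRingEnd ℂ z) ^ j / (Real.sqrt (xfact j) : ℂ) * ⟪Φ j, ψ⟫_ℂ) from by ring,
        hc, one_mul, Finset.sum_mul_sum]
      refine Finset.sum_congr rfl fun k _ => Finset.sum_congr rfl fun j _ => ?_
      rw [show (z ^ k / (Real.sqrt (xfact k) : ℂ) * ⟪φ, Φ k⟫_ℂ)
            * ((starRingEnd ℂ z) ^ j / (Real.sqrt (xfact j) : ℂ) * ⟪Φ j, ψ⟫_ℂ)
          = (z ^ k * (starRingEnd ℂ z) ^ j) * (⟪φ, Φ k⟫_ℂ * ⟪Φ j, ψ⟫_ℂ)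
              / ((Real.sqrt (xfact k) : ℂ) * (Real.sqrt (xfact j) : ℂ)) from by ring,
        hz k j]
      push_cast
      ring
    simp only [hpt]
    rw [intervalIntegral.integral_finset_sum]
    swap
    · intro k hk
      apply Continuous.intervalIntegrable
      apply continuous_finset_sum
      intro j hj
      fun_prop
    refine Finset.sum_congr rfl fun k hk => ?_
    rw [intervalIntegral.integral_finset_sum]
    swap
    · intro j hj
      apply Continuous.intervalIntegrable
      fun_prop
    simp only [intervalIntegral.integral_const_mul, aux_int_exp, sub_eq_zero, Int.natCast_inj,
      mul_ite, mul_zero]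
    rw [Finset.sum_ite_eq, if_pos hk]
    have hsqk : (Real.sqrt (xfact k) : ℂ) * (Real.sqrt (xfact k) : ℂ) = (xfact k : ℂ) := by
      rw [← Complex.ofReal_mul, Real.mul_self_sqrt (hxf k).le]
    push_cast
    rw [hsqk, show k + k = 2 * k from (two_mul k).symm]
    ring
  simp only [key]
  rw [integral_finset_sum]
  swap
  · intro k hk
    have hk' : k ≤ L + 1 := by
      have := Finset.mem_range.mp hk; omega
    exact ((hint k hk').ofReal.mul_const _)
  have step : ∀ k ∈ Finset.range (L + 2),
      (∫ r in S, ((r ^ (2 * k) : ℝ) : ℂ)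
          * (((2 * Real.pi / xfact k : ℝ) : ℂ) * (⟪φ, Φ k⟫_ℂ * ⟪Φ k, ψ⟫_ℂ)) ∂μ)
        = ⟪φ, Φ k⟫_ℂ * ⟪Φ k, ψ⟫_ℂ := by
    intro k hk
    have hk' : k ≤ L + 1 := by
      have := Finset.mem_range.mp hk; omega
    have hI : ∫ r in S, ((r ^ (2 * k) : ℝ) : ℂ) ∂μ
        = ((∫ r in S, r ^ (2 * k) ∂μ : ℝ) : ℂ) := integral_ofReal
    rw [integral_mul_const, hI, hmoment k hk']
    have hπ0 : ((Real.pi : ℝ) : ℂ) ≠ 0 := by exact_mod_cast hπ.ne'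
    have hx0 : ((xfact k : ℝ) : ℂ) ≠ 0 := by exact_mod_cast (hxf k).ne'
    push_cast
    field_simp
  rw [Finset.sum_congr rfl step, hQ, inner_sum]
  simp_rw [inner_smul_right]
  exact Finset.sum_congr rfl fun k _ => mul_comm _ _
end

section
/- Let b : ℕ → ℂ be an arbitrary sequence and z ∈ ℂ. For each L ∈ ℕ define the vector Υ_L(z) := Σ_{k=0}^{L+1} b(L+1−k) · (z^k/√(x_k!)) · Φ_k. Then for every L ≥ 1 one has A_L Υ_L(z) = z · Υ_{L−1}(z); that is, Υ_L(z) is an approximate eigenstate of A_L. -/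
/-- For an arbitrary sequence b : ℕ → ℂ and z ∈ ℂ, the vectors
Υ_L(z) = Σ_{k=0}^{L+1} b(L+1−k) (z^k/√(x_k!)) Φ_k satisfy A_L Υ_L(z) = z Υ_{L−1}(z)
for every L ≥ 1. -/
theorem statement_16
    {H : Type*} [NormedAddCommGroup H] [InnerProductSpace ℂ H] [CompleteSpace H]
    (Φ : HilbertBasis ℕ ℂ H)
    (x : ℕ → ℝ) (hx_nonneg : ∀ n, 0 ≤ x n) (hx_pos : ∀ n, 1 ≤ n → 0 < x n)
    (A : ℕ → H →L[ℂ] H)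
    (hA_zero : ∀ L, A L (Φ 0) = 0)
    (hA_mid : ∀ L k, 1 ≤ k → k ≤ L + 1 →
      A L (Φ k) = (Real.sqrt (x k) : ℂ) • Φ (k - 1))
    (hA_hi : ∀ L k, L + 2 ≤ k → A L (Φ k) = 0)
    (xfact : ℕ → ℝ) (hxfact0 : xfact 0 = 1)
    (hxfact : ∀ k, xfact (k + 1) = xfact k * x (k + 1))
    (b : ℕ → ℂ) (z : ℂ)
    (Υ : ℕ → H)
    (hΥ : ∀ L, Υ L = ∑ k ∈ Finset.range (L + 2),
        (b (L + 1 - k) * (z ^ k / (Real.sqrt (xfact k) : ℂ))) • Φ k)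
    (L : ℕ) (hL : 1 ≤ L) :
    A L (Υ L) = z • Υ (L - 1) := by
  have hxf_pos : ∀ k, 0 < xfact k := by
    intro k
    induction k with
    | zero => simp [hxfact0]
    | succ n ih => rw [hxfact n]; exact mul_pos ih (hx_pos (n + 1) (Nat.le_add_left 1 n))
  obtain ⟨M, rfl⟩ : ∃ M, L = M + 1 := ⟨L - 1, (Nat.succ_pred_eq_of_pos hL).symm⟩
  rw [hΥ, hΥ, map_sum]
  simp only [map_smul]
  rw [Finset.sum_range_succ' (fun k => (b (M + 1 + 1 - k) * (z ^ k / (Real.sqrt (xfact k) : ℂ))) • A (M + 1) (Φ k)) (M + 2)]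
  rw [hA_zero, smul_zero, add_zero]
  rw [Finset.smul_sum]
  simp only [Nat.add_sub_cancel]
  apply Finset.sum_congr rfl
  intro i hi
  have hi' := Finset.mem_range.mp hi
  rw [hA_mid (M + 1) (i + 1) (Nat.le_add_left 1 i) (by omega)]
  rw [Nat.add_sub_cancel]
  rw [smul_smul, smul_smul]
  congr 1
  have h1 : Real.sqrt (xfact (i + 1)) = Real.sqrt (xfact i) * Real.sqrt (x (i + 1)) := by
    rw [hxfact, Real.sqrt_mul (hxf_pos i).le]
  have hs : (Real.sqrt (x (i + 1)) : ℂ) ≠ 0 := by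
    exact_mod_cast (Real.sqrt_pos.mpr (hx_pos (i + 1) (Nat.le_add_left 1 i))).ne'
  have h2 : Nat.succ M + 1 - (i + 1) = M + 1 - i := by omega
  have hsf : (Real.sqrt (xfact i) : ℂ) ≠ 0 := by
    exact_mod_cast (Real.sqrt_pos.mpr (hxf_pos i)).ne'
  rw [h2, h1]
  push_cast
  field_simp
  ring
end

section
/- The truncated Gazeau–Klauder states are temporally stable: for every L ∈ ℕ, every J ≥ 0, every γ ∈ ℝ and every t ∈ ℝ, one has exp(−i t H_L) |J, γ; L⟩ = |J, γ + ωt; L⟩. -/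
lemma exp_apply_eigenvector
    {H : Type*} [NormedAddCommGroup H] [InnerProductSpace ℂ H] [CompleteSpace H]
    (T : H →L[ℂ] H) (v : H) (c : ℂ) (h : T v = c • v) :
    NormedSpace.exp T v = Complex.exp c • v := by
  have hpow : ∀ k : ℕ, (T ^ k) v = c ^ k • v := by
    intro k
    induction k with
    | zero => simp
    | succ k ih =>
        rw [pow_succ, ContinuousLinearMap.mul_apply, h, map_smul, ih,
          smul_smul, pow_succ, mul_comm]
  have h1 : HasSum (fun n : ℕ => ((n.factorial : ℂ)⁻¹ • T ^ n)) (NormedSpace.exp T) :=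
    NormedSpace.exp_series_hasSum_exp' T
  have h2 := h1.mapL (ContinuousLinearMap.apply ℂ H v)
  simp only [ContinuousLinearMap.apply_apply, ContinuousLinearMap.smul_apply, hpow,
    smul_smul] at h2
  have h3 : HasSum (fun n : ℕ => ((n.factorial : ℂ)⁻¹ * c ^ n) • v) (Complex.exp c • v) := by
    have := (NormedSpace.exp_series_hasSum_exp' (𝕂 := ℂ) c).smul_const v
    simpa [Complex.exp_eq_exp_ℂ, smul_eq_mul] using this
  exact h2.unique h3

/-- The truncated Gazeau–Klauder states are temporally stable:
exp(−i t H_L) |J, γ; L⟩ = |J, γ + ωt; L⟩. -/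
theorem statement_17
    {H : Type*} [NormedAddCommGroup H] [InnerProductSpace ℂ H] [CompleteSpace H]
    (Φ : HilbertBasis ℕ ℂ H)
    (ε : ℕ → ℝ) (hε0 : ε 0 = 0) (hεmono : StrictMono ε)
    (ω : ℝ)
    (ρfact : ℕ → ℝ) (hρfact0 : ρfact 0 = 1)
    (hρfact : ∀ n, ρfact (n + 1) = ρfact n * ε (n + 1))
    (NL : ℕ → ℝ → ℝ)
    (hNL : ∀ L J, NL L J = Real.sqrt (∑ n ∈ Finset.range (L + 2), J ^ n / ρfact n))
    (ket : ℝ → ℝ → ℕ → H)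
    (hket : ∀ (J γ : ℝ) (L : ℕ), ket J γ L = ((NL L J)⁻¹ : ℂ)
        • ∑ n ∈ Finset.range (L + 2),
            (((Real.sqrt (J ^ n) : ℝ) : ℂ) * Complex.exp (-Complex.I * (ε n : ℂ) * (γ : ℂ))
              / ((Real.sqrt (ρfact n) : ℝ) : ℂ)) • Φ n)
    (HL : ℕ → H →L[ℂ] H)
    (hHL_low : ∀ L n, n ≤ L + 1 → HL L (Φ n) = (((ω * ε n : ℝ)) : ℂ) • Φ n)
    (hHL_hi : ∀ L n, L + 2 ≤ n → HL L (Φ n) = 0)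
    (L : ℕ) (J : ℝ) (hJ : 0 ≤ J) (γ t : ℝ) :
    NormedSpace.exp ((-Complex.I * (t : ℂ)) • HL L) (ket J γ L)
      = ket J (γ + ω * t) L := by
  rw [hket J γ L, hket J (γ + ω * t) L, map_smul, map_sum]
  congr 1
  refine Finset.sum_congr rfl fun n hn => ?_
  have hn' : n ≤ L + 1 := by
    have := Finset.mem_range.mp hn; omega
  have heig : ((-Complex.I * (t : ℂ)) • HL L) (Φ n)
      = (-Complex.I * (t : ℂ) * ((ω * ε n : ℝ) : ℂ)) • Φ n := by
    rw [ContinuousLinearMap.smul_apply, hHL_low L n hn', smul_smul]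
  rw [map_smul, exp_apply_eigenvector _ _ _ heig, smul_smul]
  congr 1
  rw [mul_assoc, div_mul_eq_mul_div, mul_assoc, ← Complex.exp_add]
  congr 3
  push_cast
  ring
end

section
/- The truncated Gazeau–Klauder states satisfy the approximated action identity: for every L ≥ 1, every J ≥ 0 and every γ ∈ ℝ, one has ⟨ |J, γ; L⟩ , H_L |J, γ; L⟩ ⟩ = J ω (N_{L−1}(J)/N_L(J))². -/
open scoped InnerProductSpace

/-- The truncated Gazeau–Klauder states satisfy the approximated action
identity: ⟨J,γ;L| H_L |J,γ;L⟩ = J ω (N_{L−1}(J)/N_L(J))² for L ≥ 1. -/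
theorem statement_18
    {H : Type*} [NormedAddCommGroup H] [InnerProductSpace ℂ H] [CompleteSpace H]
    (Φ : HilbertBasis ℕ ℂ H)
    (ε : ℕ → ℝ) (hε0 : ε 0 = 0) (hεmono : StrictMono ε)
    (ω : ℝ)
    (ρfact : ℕ → ℝ) (hρfact0 : ρfact 0 = 1)
    (hρfact : ∀ n, ρfact (n + 1) = ρfact n * ε (n + 1))
    (NL : ℕ → ℝ → ℝ)
    (hNL : ∀ L J, NL L J = Real.sqrt (∑ n ∈ Finset.range (L + 2), J ^ n / ρfact n))
    (ket : ℝ → ℝ → ℕ → H)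
    (hket : ∀ (J γ : ℝ) (L : ℕ), ket J γ L = ((NL L J)⁻¹ : ℂ)
        • ∑ n ∈ Finset.range (L + 2),
            (((Real.sqrt (J ^ n) : ℝ) : ℂ) * Complex.exp (-Complex.I * (ε n : ℂ) * (γ : ℂ))
              / ((Real.sqrt (ρfact n) : ℝ) : ℂ)) • Φ n)
    (HL : ℕ → H →L[ℂ] H)
    (hHL_low : ∀ L n, n ≤ L + 1 → HL L (Φ n) = (((ω * ε n : ℝ)) : ℂ) • Φ n)
    (hHL_hi : ∀ L n, L + 2 ≤ n → HL L (Φ n) = 0)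
    (L : ℕ) (hL : 1 ≤ L) (J : ℝ) (hJ : 0 ≤ J) (γ : ℝ) :
    ⟪ket J γ L, HL L (ket J γ L)⟫_ℂ
      = (((J * ω * (NL (L - 1) J / NL L J) ^ 2 : ℝ)) : ℂ) := by
  obtain ⟨M, rfl⟩ : ∃ M, L = M + 1 := ⟨L - 1, by omega⟩
  have hεpos : ∀ n, 0 < ε (n + 1) := fun n => hε0 ▸ hεmono (Nat.succ_pos n)
  have hρpos : ∀ n, 0 < ρfact n := by
    intro n
    induction n with
    | zero => simp [hρfact0]
    | succ k ih => rw [hρfact]; exact mul_pos ih (hεpos k)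
  set c : ℕ → ℂ := fun n =>
    ((Real.sqrt (J ^ n) : ℝ) : ℂ) * Complex.exp (-Complex.I * (ε n : ℂ) * (γ : ℂ))
      / ((Real.sqrt (ρfact n) : ℝ) : ℂ) with hc
  have hcc : ∀ n, (starRingEnd ℂ) (c n) * c n = ((J ^ n / ρfact n : ℝ) : ℂ) := by
    intro n
    have hexp : (starRingEnd ℂ) (Complex.exp (-Complex.I * (ε n : ℂ) * (γ : ℂ)))
        * Complex.exp (-Complex.I * (ε n : ℂ) * (γ : ℂ)) = 1 := by
      rw [← Complex.exp_conj, ← Complex.exp_add]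
      have : (starRingEnd ℂ) (-Complex.I * (ε n : ℂ) * (γ : ℂ))
          + -Complex.I * (ε n : ℂ) * (γ : ℂ) = 0 := by
        rw [map_mul, map_mul, map_neg, Complex.conj_I, Complex.conj_ofReal,
          Complex.conj_ofReal]
        ring
      rw [this, Complex.exp_zero]
    simp only [hc]
    rw [map_div₀, map_mul, Complex.conj_ofReal, Complex.conj_ofReal, div_mul_div_comm,
      mul_mul_mul_comm, hexp, mul_one, ← Complex.ofReal_mul, ← Complex.ofReal_mul,
      Real.mul_self_sqrt (pow_nonneg hJ n), Real.mul_self_sqrt (hρpos n).le,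
      Complex.ofReal_div]
  have hHLket : HL (M + 1) (ket J γ (M + 1)) = ((NL (M + 1) J)⁻¹ : ℂ)
      • ∑ n ∈ Finset.range (M + 3), ((((ω * ε n : ℝ)) : ℂ) * c n) • Φ n := by
    rw [hket, map_smul, map_sum]
    congr 1
    refine Finset.sum_congr rfl fun n hn => ?_
    rw [map_smul, hHL_low (M + 1) n (by have := Finset.mem_range.1 hn; omega), smul_smul,
      mul_comm]
  have hinner : ⟪∑ n ∈ Finset.range (M + 3), c n • Φ n,
      ∑ n ∈ Finset.range (M + 3), ((((ω * ε n : ℝ)) : ℂ) * c n) • Φ n⟫_ℂ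
      = ∑ n ∈ Finset.range (M + 3), ((ω * ε n * (J ^ n / ρfact n) : ℝ) : ℂ) := by
    simp only [Φ.orthonormal.inner_sum]
    refine Finset.sum_congr rfl fun n hn => ?_
    rw [show (starRingEnd ℂ) (c n) * ((((ω * ε n : ℝ)) : ℂ) * c n)
        = (((ω * ε n : ℝ)) : ℂ) * ((starRingEnd ℂ) (c n) * c n) by ring, hcc n]
    push_cast; ring
  rw [hHLket, hket, inner_smul_left, inner_smul_right, hinner]
  simp only [← Complex.ofReal_inv]
  rw [Complex.conj_ofReal, ← Complex.ofReal_sum, ← Complex.ofReal_mul,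
    ← Complex.ofReal_mul]
  congr 1
  -- now a real identity
  have hterm : ∀ n, 0 ≤ J ^ n / ρfact n := fun n =>
    div_nonneg (pow_nonneg hJ n) (hρpos n).le
  set T : ℝ := ∑ n ∈ Finset.range (M + 2), J ^ n / ρfact n with hT
  set S : ℝ := ∑ n ∈ Finset.range (M + 3), J ^ n / ρfact n with hS
  have hTpos : 0 < T :=
    Finset.sum_pos' (fun i _ => hterm i)
      ⟨0, Finset.mem_range.2 (by omega), by simp [hρfact0]⟩
  have hSpos : 0 < S :=
    Finset.sum_pos' (fun i _ => hterm i)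
      ⟨0, Finset.mem_range.2 (by omega), by simp [hρfact0]⟩
  have hshift : ∑ n ∈ Finset.range (M + 3), ω * ε n * (J ^ n / ρfact n) = J * ω * T := by
    rw [show M + 3 = (M + 2) + 1 from rfl, Finset.sum_range_succ', hε0, hT, Finset.mul_sum]
    simp only [mul_zero, zero_mul, add_zero]
    refine Finset.sum_congr rfl fun i _ => ?_
    rw [hρfact, pow_succ]
    have h1 : ε (i + 1) ≠ 0 := (hεpos i).ne'
    have h2 : ρfact i ≠ 0 := (hρpos i).ne'
    field_simp
  rw [hshift, hNL, hNL, show M + 1 - 1 = M from rfl, ← hT, ← hS, div_pow,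
    Real.sq_sqrt hTpos.le, Real.sq_sqrt hSpos.le, ← mul_assoc, ← mul_inv,
    Real.mul_self_sqrt hSpos.le, div_eq_mul_inv]
  ring
end

section
/- Let q ∈ ℝ and f : ℕ → ℝ be a function with f(k) > 0 for all k, and suppose the sequence (x_n) satisfies x_0 = 0 and x_{n+1} = Σ_{k=0}^{n} q^{n−k} f(k) for all n ≥ 0 (equivalently, x_1 = f(0) and x_{n+1} = q x_n + f(n)). Then the operators A_L built from this sequence satisfy the generalized q-mutation relation on the truncated range: for every L ∈ ℕ and every k with 0 ≤ k ≤ L, (A_L A_L† − q A_L† A_L) Φ_k = f(k) Φ_k. -/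
/-- If x_0 = 0 and x_{n+1} = q x_n + f(n) with f(k) > 0, then
(A_L A_L† − q A_L† A_L) Φ_k = f(k) Φ_k for every L and every 0 ≤ k ≤ L. -/
theorem statement_19
    {H : Type*} [NormedAddCommGroup H] [InnerProductSpace ℂ H] [CompleteSpace H]
    (Φ : HilbertBasis ℕ ℂ H)
    (x : ℕ → ℝ) (hx_nonneg : ∀ n, 0 ≤ x n) (hx_pos : ∀ n, 1 ≤ n → 0 < x n)
    (A : ℕ → H →L[ℂ] H)
    (hA_zero : ∀ L, A L (Φ 0) = 0)
    (hA_mid : ∀ L k, 1 ≤ k → k ≤ L + 1 →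
      A L (Φ k) = (Real.sqrt (x k) : ℂ) • Φ (k - 1))
    (hA_hi : ∀ L k, L + 2 ≤ k → A L (Φ k) = 0)
    (q : ℝ) (f : ℕ → ℝ) (hf : ∀ k, 0 < f k)
    (hx0 : x 0 = 0)
    (hrec : ∀ n, x (n + 1) = q * x n + f n)
    (L : ℕ) (k : ℕ) (hk : k ≤ L) :
    (A L ∘L ContinuousLinearMap.adjoint (A L)
      - ((q : ℝ) : ℂ) • (ContinuousLinearMap.adjoint (A L) ∘L A L)) (Φ k)
      = ((f k : ℝ) : ℂ) • Φ k := by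
  have hortho := Φ.orthonormal
  have hinner : ∀ i j : ℕ, (inner ℂ (Φ i) (Φ j) : ℂ) = if i = j then 1 else 0 := by
    intro i j
    rw [orthonormal_iff_ite.mp hortho]
  -- adjoint action on Φ m for m ≤ L
  have hadj : ∀ m : ℕ, m ≤ L →
      ContinuousLinearMap.adjoint (A L) (Φ m)
        = (Real.sqrt (x (m + 1)) : ℂ) • Φ (m + 1) := by
    intro m hm
    apply Φ.repr.injective
    ext i
    rw [Φ.repr_apply_apply, Φ.repr_apply_apply]
    rw [ContinuousLinearMap.adjoint_inner_right]
    rw [inner_smul_right, hinner]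
    rcases Nat.eq_zero_or_pos i with hi0 | hi1
    · subst hi0
      rw [hA_zero, inner_zero_left]
      simp
    · rcases le_or_gt i (L + 1) with hile | hige
      · rw [hA_mid L i hi1 hile, inner_smul_left, hinner]
        by_cases h : i = m + 1
        · subst h
          simp
        · have : i - 1 ≠ m := by omega
          simp [this, h]
      · rw [hA_hi L i (by omega), inner_zero_left]
        have : i ≠ m + 1 := by omega
        simp [this]
  have hsq : ∀ n : ℕ, (Real.sqrt (x n) : ℂ) * (Real.sqrt (x n) : ℂ) = (x n : ℂ) := by
    intro n
    rw [← Complex.ofReal_mul, Real.mul_self_sqrt (hx_nonneg n)]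
  simp only [ContinuousLinearMap.sub_apply, ContinuousLinearMap.comp_apply,
    ContinuousLinearMap.smul_apply]
  rw [hadj k hk, map_smul, hA_mid L (k + 1) (by omega) (by omega)]
  simp only [Nat.add_sub_cancel]
  rcases Nat.eq_zero_or_pos k with hk0 | hk1
  · subst hk0
    rw [hA_zero]
    rw [smul_smul, hsq]
    have : x 1 = f 0 := by rw [hrec 0, hx0]; ring
    simp [this]
  · rw [hA_mid L k hk1 (by omega), map_smul, hadj (k - 1) (by omega)]
    have hk1' : k - 1 + 1 = k := by omega
    rw [hk1']
    rw [smul_smul, smul_smul, smul_smul, hsq, mul_assoc, hsq]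
    rw [← sub_smul]
    congr 1
    have := hrec k
    push_cast [this]
    ring
end
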